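/- Let f : [0,1] → ℝ be absolutely continuous with derivative f' ∈ L¹(0,1). Then for every α ∈ ℝ, k ≥ 1 and p ∈ [1,∞) with f ∈ L^p(0,1), Λ(α, k, p, f) ≤ Λ(α − 1, k − 1, 1, f'). -/

import Mathlib

open MeasureTheory

/-- Wei's irregularity index `Λ(α, k, p, f)` on `[0,1]`. -/
noncomputable def weiIndex (α : ℝ) (k : ℕ) (p : ℝ) (f : ℝ → ℝ) : ℝ :=
  sInf { v : ℝ | ∃ (a b : ℝ) (P : Polynomial ℝ), 0 ≤ a ∧ a < b ∧ b ≤ 1 ∧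
    P.natDegree ≤ k ∧
    v = (b - a) ^ (-α) * (⨍ x in Set.Ioo a b, |f x - P.eval x| ^ p) ^ (1 / p) }

noncomputable def pAnti (P : Polynomial ℝ) : Polynomial ℝ :=
  ∑ i ∈ Finset.range (P.natDegree + 1),
    Polynomial.C (P.coeff i / (i + 1)) * Polynomial.X ^ (i + 1)

lemma pAnti_derivative (P : Polynomial ℝ) : (pAnti P).derivative = P := by
  unfold pAnti
  rw [map_sum]
  conv_rhs => rw [P.as_sum_range]
  refine Finset.sum_congr rfl fun i _ => ?_
  rw [Polynomial.derivative_C_mul_X_pow, Nat.add_sub_cancel,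
    Polynomial.C_mul_X_pow_eq_monomial]
  congr 1
  push_cast
  field_simp

lemma pAnti_natDegree (P : Polynomial ℝ) : (pAnti P).natDegree ≤ P.natDegree + 1 := by
  refine Polynomial.natDegree_sum_le_of_forall_le _ _ fun i hi => ?_
  refine (Polynomial.natDegree_C_mul_le _ _).trans ?_
  rw [Polynomial.natDegree_X_pow]
  exact Nat.add_le_add_right (Nat.lt_succ_iff.mp (Finset.mem_range.mp hi)) 1

theorem weiIndex_le_of_deriv (α : ℝ) (k : ℕ) (hk : 1 ≤ k) (p : ℝ) (hp : 1 ≤ p)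
    (f f' : ℝ → ℝ)
    (hf' : IntegrableOn f' (Set.Ioo (0:ℝ) 1))
    (hAC : ∀ x ∈ Set.Icc (0:ℝ) 1, f x = f 0 + ∫ t in (0:ℝ)..x, f' t)
    (hf : MemLp f (ENNReal.ofReal p) (volume.restrict (Set.Ioo (0:ℝ) 1))) :
    weiIndex α k p f ≤ weiIndex (α - 1) (k - 1) 1 f' := by
  have hp0 : (0:ℝ) < p := lt_of_lt_of_le one_pos hp
  have hbdd : BddBelow { v : ℝ | ∃ (a b : ℝ) (P : Polynomial ℝ), 0 ≤ a ∧ a < b ∧ b ≤ 1 ∧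
      P.natDegree ≤ k ∧
      v = (b - a) ^ (-α) * (⨍ x in Set.Ioo a b, |f x - P.eval x| ^ p) ^ (1 / p) } := by
    refine ⟨0, fun v hv => ?_⟩
    obtain ⟨a, b, P, ha, hab, hb1, hdeg, rfl⟩ := hv
    have h1 : (0:ℝ) ≤ (b - a) ^ (-α) := Real.rpow_nonneg (by linarith) _
    have h2 : (0:ℝ) ≤ ⨍ x in Set.Ioo a b, |f x - P.eval x| ^ p := by
      refine integral_nonneg fun x => Real.rpow_nonneg (abs_nonneg _) _
    exact mul_nonneg h1 (Real.rpow_nonneg h2 _)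
  rw [weiIndex, weiIndex]
  refine le_csInf ⟨_, 0, 1, 0, le_refl (0:ℝ), one_pos, le_refl (1:ℝ), by simp, rfl⟩ ?_
  rintro v ⟨a, b, P, ha, hab, hb1, hdeg, rfl⟩
  set d := b - a with hd_def
  have hd : 0 < d := by simp [hd_def]; linarith
  -- the interval is inside [0,1]
  have hsub : Set.Ioo a b ⊆ Set.Ioo (0:ℝ) 1 := fun x hx => ⟨lt_of_le_of_lt ha hx.1, lt_of_lt_of_le hx.2 hb1⟩
  -- the polynomial Q
  set R := pAnti P with hR
  set Q := Polynomial.C (f a - R.eval a) + R with hQ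
  have hQdeg : Q.natDegree ≤ k := by
    refine (Polynomial.natDegree_add_le _ _).trans ?_
    simp only [Polynomial.natDegree_C, max_le_iff]
    refine ⟨Nat.zero_le _, (pAnti_natDegree P).trans ?_⟩
    calc P.natDegree + 1 ≤ (k - 1) + 1 := Nat.add_le_add_right hdeg 1
    _ = k := Nat.succ_pred_eq_of_pos hk
  -- FTC for Q
  have hPderiv : ∀ x : ℝ, HasDerivAt (fun t => R.eval t) (P.eval x) x := by
    intro x
    have := R.hasDerivAt x
    rwa [pAnti_derivative] at this
  have hPint : ∀ x y : ℝ, IntervalIntegrable (fun t => P.eval t) volume x y :=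
    fun x y => (P.continuous.intervalIntegrable x y)
  have hFTC : ∀ x : ℝ, ∫ t in a..x, P.eval t = R.eval x - R.eval a := by
    intro x
    exact intervalIntegral.integral_eq_sub_of_hasDerivAt
      (fun t _ => hPderiv t) (hPint a x)
  -- integrability of f'
  have hf'Icc : IntegrableOn f' (Set.Icc (0:ℝ) 1) := by
    rwa [integrableOn_Icc_iff_integrableOn_Ioo]
  have hf'II : ∀ x ∈ Set.Icc (0:ℝ) 1, ∀ y ∈ Set.Icc (0:ℝ) 1,
      IntervalIntegrable f' volume x y := by
    intro x hx y hy
    rw [intervalIntegrable_iff]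
    exact hf'Icc.mono_set (Set.uIoc_subset_uIcc.trans (Set.uIcc_subset_Icc hx hy))
  have haIcc : a ∈ Set.Icc (0:ℝ) 1 := ⟨ha, le_of_lt (lt_of_lt_of_le hab hb1)⟩
  -- g and I₂
  set g := fun x => f' x - P.eval x with hg
  have hg_int : IntegrableOn g (Set.Ioo a b) := by
    refine (hf'.mono_set hsub).sub ?_
    exact (P.continuous.integrableOn_Icc).mono_set Set.Ioo_subset_Icc_self
  set I₂ := ∫ x in Set.Ioo a b, |g x| with hI₂def
  have hI₂ : 0 ≤ I₂ := integral_nonneg fun x => abs_nonneg _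
  -- pointwise bound
  have hpt : ∀ x ∈ Set.Ioo a b, |f x - Q.eval x| ≤ I₂ := by
    intro x hx
    have hxIcc : x ∈ Set.Icc (0:ℝ) 1 := Set.Icc_subset_Icc (le_refl _) (le_refl _)
      (Set.Ioo_subset_Icc_self (hsub hx))
    have hfx : f x - f a = ∫ t in a..x, f' t := by
      rw [hAC x hxIcc, hAC a haIcc]
      have := intervalIntegral.integral_interval_sub_left
        (hf'II 0 ⟨le_refl _, zero_le_one⟩ x hxIcc) (hf'II 0 ⟨le_refl _, zero_le_one⟩ a haIcc)
      linarith [this]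
    have hQx : Q.eval x - f a = ∫ t in a..x, P.eval t := by
      simp [hQ, hFTC x]
      ring
    have key : f x - Q.eval x = ∫ t in a..x, g t := by
      have : (fun t => g t) = fun t => f' t - P.eval t := rfl
      rw [this, intervalIntegral.integral_sub
        (hf'II a haIcc x hxIcc) (hPint a x)]
      rw [← hfx, ← hQx]; ring
    rw [key]
    have hax : a ≤ x := le_of_lt hx.1
    calc |∫ t in a..x, g t| ≤ ∫ t in a..x, |g t| :=
          intervalIntegral.abs_integral_le_integral_abs hax
      _ = ∫ t in Set.Ioc a x, |g t| := intervalIntegral.integral_of_le hax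
      _ ≤ I₂ := by
          refine setIntegral_mono_set hg_int.abs ?_ ?_
          · exact Filter.Eventually.of_forall fun t => abs_nonneg _
          · exact HasSubset.Subset.eventuallyLE
              (fun t ht => ⟨ht.1, lt_of_le_of_lt ht.2 hx.2⟩)
  -- membership of our candidate
  refine le_trans (csInf_le hbdd ⟨a, b, Q, ha, hab, hb1, hQdeg, rfl⟩) ?_
  -- volume of Ioo
  have hvol : (volume (Set.Ioo a b)).toReal = d := by
    rw [Real.volume_Ioo, ENNReal.toReal_ofReal (by linarith)]
  -- integral bound
  set A := ∫ x in Set.Ioo a b, |f x - Q.eval x| ^ p with hA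
  have hA0 : 0 ≤ A := integral_nonneg fun x => Real.rpow_nonneg (abs_nonneg _) _
  have hAle : A ≤ d * I₂ ^ p := by
    have hle : (∫ x in Set.Ioo a b, |f x - Q.eval x| ^ p) ≤
        ∫ _x in Set.Ioo a b, I₂ ^ p := by
      refine integral_mono_of_nonneg ?_ (integrableOn_const ?_) ?_
      · exact Filter.Eventually.of_forall fun x => Real.rpow_nonneg (abs_nonneg _) _
      · rw [Real.volume_Ioo]; exact ENNReal.ofReal_ne_top
      · exact (ae_restrict_iff' measurableSet_Ioo).mpr
          (Filter.Eventually.of_forall fun x hx =>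
            Real.rpow_le_rpow (abs_nonneg _) (hpt x hx) (le_of_lt hp0))
    calc A ≤ ∫ _x in Set.Ioo a b, I₂ ^ p := hle
      _ = d * I₂ ^ p := by rw [setIntegral_const, smul_eq_mul, measureReal_def, hvol]
  -- averages
  have havg1 : (⨍ x in Set.Ioo a b, |f x - Q.eval x| ^ p) = d⁻¹ * A := by
    rw [setAverage_eq, measureReal_def, hvol, smul_eq_mul]
  have havg2 : (⨍ x in Set.Ioo a b, |f' x - P.eval x| ^ (1:ℝ)) = d⁻¹ * I₂ := by
    rw [setAverage_eq, measureReal_def, hvol, smul_eq_mul]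
    congr 1
    simp [hI₂def, hg]
  rw [havg1, havg2]
  have hstep : (d⁻¹ * A) ^ (1 / p) ≤ I₂ := by
    have h1 : d⁻¹ * A ≤ I₂ ^ p := by
      have h := mul_le_mul_of_nonneg_left hAle (inv_nonneg.2 hd.le)
      calc d⁻¹ * A ≤ d⁻¹ * (d * I₂ ^ p) := h
        _ = I₂ ^ p := by field_simp
    have h2 : (d⁻¹ * A) ^ (1/p) ≤ (I₂ ^ p) ^ (1/p) :=
      Real.rpow_le_rpow (mul_nonneg (inv_nonneg.2 (le_of_lt hd)) hA0) h1 (by positivity)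
    rwa [← Real.rpow_mul hI₂, mul_one_div, div_self (ne_of_gt hp0), Real.rpow_one] at h2
  have h11 : (1:ℝ)/1 = 1 := by norm_num
  rw [h11, Real.rpow_one]
  have hrw : d ^ (-(α-1)) * (d⁻¹ * I₂) = d ^ (-α) * I₂ := by
    rw [show -(α-1) = 1 + (-α) by ring, Real.rpow_add hd, Real.rpow_one]
    field_simp
  calc d ^ (-α) * (d⁻¹ * A) ^ (1 / p) ≤ d ^ (-α) * I₂ :=
        mul_le_mul_of_nonneg_left hstep (Real.rpow_nonneg (le_of_lt hd) _)
    _ = d ^ (-(α - 1)) * (d⁻¹ * I₂) := hrw.symm
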